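/- Let $E > 0$, $m \ge 0$ and let $f$ solve $-f'' - \frac{m(m+1)}{r^2} f = E f$ on $[r_0, r_1]$ with $r_0 > 0$. If $\int_{r_0}^{r_1} \left(f(r)^2 + E^{-1} f'(r)^2\right) dr \le C$, then $f(r_0)^2 + E^{-1} f'(r_0)^2 \le \frac{C}{r_1 - r_0} \exp\left(\frac{m(m+1)}{2\sqrt{E}\, r_0}\right)$. -/

import Mathlib

open MeasureTheory

lemma monoAux {F F' : ℝ → ℝ} {a b : ℝ}
    (hF : ∀ r ∈ Set.Icc a b, HasDerivAt F (F' r) r)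
    (h0 : ∀ r ∈ Set.Icc a b, 0 ≤ F' r) : MonotoneOn F (Set.Icc a b) := by
  apply monotoneOn_of_deriv_nonneg (convex_Icc a b)
    (fun r hr => (hF r hr).continuousAt.continuousWithinAt)
  · intro r hr
    rw [interior_Icc] at hr
    exact ((hF r (Set.Ioo_subset_Icc_self hr)).differentiableAt).differentiableWithinAt
  · intro r hr
    rw [interior_Icc] at hr
    rw [(hF r (Set.Ioo_subset_Icc_self hr)).deriv]
    exact h0 r (Set.Ioo_subset_Icc_self hr)

lemma key1 {s : ℝ} (hs : 1 ≤ s) : 2 * Real.log s ≤ s - 1/s := by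
  have hmono : MonotoneOn (fun u : ℝ => u - 1/u - 2*Real.log u) (Set.Icc 1 s) := by
    apply monoAux (F' := fun u => 1 + 1/u^2 - 2/u)
    · intro u hu
      have hu0 : (0:ℝ) < u := lt_of_lt_of_le one_pos hu.1
      have h1 : HasDerivAt (fun u : ℝ => u - 1/u - 2*Real.log u)
          (1 - (-(u^2)⁻¹) - 2 * u⁻¹) u := by
        have ha : HasDerivAt (fun u : ℝ => 1/u) (-(u^2)⁻¹) u := by
          simpa [one_div] using hasDerivAt_inv hu0.ne'
        exact ((hasDerivAt_id u).sub ha).sub ((Real.hasDerivAt_log hu0.ne').const_mul 2)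
      convert h1 using 1
      field_simp
      ring
    · intro u hu
      have hu0 : (0:ℝ) < u := lt_of_lt_of_le one_pos hu.1
      have heq : 1 + 1/u^2 - 2/u = (1 - 1/u)^2 := by
        field_simp
        ring
      rw [heq]
      positivity
  have h0 := hmono (Set.left_mem_Icc.2 hs) (Set.right_mem_Icc.2 hs) hs
  simp only [Real.log_one] at h0
  norm_num at h0
  rw [one_div]
  linarith

lemma logAux {x : ℝ} (hx : 0 ≤ x) : Real.log (1+x) ≤ x / Real.sqrt (1+x) := by
  set t := Real.sqrt (1+x) with ht_def
  have h1 : (0:ℝ) < 1 + x := by linarith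
  have ht : 1 ≤ t := by
    rw [ht_def]
    rw [show (1:ℝ) = Real.sqrt 1 from (Real.sqrt_one).symm]
    exact Real.sqrt_le_sqrt (by norm_num; linarith)
  have ht0 : (0:ℝ) < t := lt_of_lt_of_le one_pos ht
  have ht2 : t^2 = 1 + x := Real.sq_sqrt h1.le
  have hlog : Real.log (1+x) = 2 * Real.log t := by
    rw [← ht2, sq, Real.log_mul ht0.ne' ht0.ne']
    ring
  rw [hlog]
  have := key1 ht
  have heq : t - 1/t = x / t := by
    field_simp
    nlinarith [ht2]
  linarith [heq ▸ this]

set_option maxHeartbeats 2000000 in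
theorem stmt_15 (E : ℝ) (hE : 0 < E) (m : ℕ) (r0 r1 : ℝ) (hr0 : 0 < r0) (hr01 : r0 < r1)
    (f f' f'' : ℝ → ℝ) (C : ℝ)
    (hf : ∀ r ∈ Set.Icc r0 r1, HasDerivAt f (f' r) r)
    (hf' : ∀ r ∈ Set.Icc r0 r1, HasDerivAt f' (f'' r) r)
    (hode : ∀ r ∈ Set.Icc r0 r1,
      -f'' r - (m * (m + 1) : ℝ) / r ^ 2 * f r = E * f r)
    (hint : ∫ r in Set.Icc r0 r1, (f r ^ 2 + E⁻¹ * f' r ^ 2) ≤ C) :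
    f r0 ^ 2 + E⁻¹ * f' r0 ^ 2 ≤
      C / (r1 - r0) * Real.exp ((m * (m + 1) : ℝ) / (2 * Real.sqrt E * r0)) := by
  set c : ℝ := (m : ℝ) * ((m : ℝ) + 1) with hc_def
  have hc0 : 0 ≤ c := by positivity
  have hcc : c = 0 ∨ 2 ≤ c := by
    rcases Nat.eq_zero_or_pos m with h | h
    · left; simp [hc_def, h]
    · right
      have h1 : (1:ℝ) ≤ (m:ℝ) := by exact_mod_cast h
      nlinarith
  -- ODE in explicit form
  have hode' : ∀ r ∈ Set.Icc r0 r1, f'' r = -(E + c/r^2) * f r := by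
    intro r hr
    have h := hode r hr
    have hexp : -(E + c/r^2) * f r = -(E * f r) - c/r^2 * f r := by ring
    rw [hexp]
    linarith
  set qR : ℝ := E + c/(4*r0^2) with hqR_def
  have hc4 : (0:ℝ) ≤ c/(4*r0^2) := div_nonneg hc0 (by positivity)
  have hqR : 0 < qR := by rw [hqR_def]; linarith
  have hEqR : E ≤ qR := by rw [hqR_def]; linarith
  set sq : ℝ := Real.sqrt qR with hsq_def
  have hsqpos : 0 < sq := Real.sqrt_pos.2 hqR
  have hsq2 : sq^2 = qR := Real.sq_sqrt hqR.le
  set sE : ℝ := Real.sqrt E with hsE_def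
  have hsEpos : 0 < sE := Real.sqrt_pos.2 hE
  have hsE2 : sE^2 = E := Real.sq_sqrt hE.le
  set W : ℝ → ℝ := fun r => f r^2 + E⁻¹ * f' r^2 with hW_def
  set A : ℝ → ℝ := fun r => qR * f r^2 + f' r^2 with hA_def
  set Φ : ℝ → ℝ := fun r => ((E - qR)*r - c/r)/sq with hPhi_def
  set G : ℝ → ℝ := fun r => A r * Real.exp (Φ r) with hG_def
  set Wb : ℝ → ℝ := fun r => f r^2 + r^2 * f' r^2/(E*r^2 + c) with hWb_def
  have hmin : r0 ≤ min (2*r0) r1 := le_min (by linarith) hr01.le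
  -- monotonicity of G on [r0, min (2 r0) r1]
  have hGmono : MonotoneOn G (Set.Icc r0 (min (2*r0) r1)) := by
    have hsub : Set.Icc r0 (min (2*r0) r1) ⊆ Set.Icc r0 r1 :=
      Set.Icc_subset_Icc le_rfl (min_le_right _ _)
    apply monoAux (F' := fun r =>
      ((qR * (2 * f r ^ 1 * f' r) + 2 * f' r ^ 1 * f'' r)
        + A r * (((E - qR) + c/r^2)/sq)) * Real.exp (Φ r))
    · intro r hr
      have hr' := hsub hr
      have hrpos : 0 < r := lt_of_lt_of_le hr0 hr'.1
      have hAd : HasDerivAt A (qR * (2 * f r ^ 1 * f' r) + 2 * f' r ^ 1 * f'' r) r :=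
        (((hf r hr').pow 2).const_mul qR).add ((hf' r hr').pow 2)
      have hΦd : HasDerivAt Φ (((E - qR) + c/r^2)/sq) r := by
        have h1 : HasDerivAt (fun r : ℝ => (E - qR)*r - c/r)
            ((E - qR) * 1 - c * (-(r^2)⁻¹)) r := by
          have ha : HasDerivAt (fun r : ℝ => c/r) (c * (-(r^2)⁻¹)) r := by
            simpa [div_eq_mul_inv] using (hasDerivAt_inv hrpos.ne').const_mul c
          exact (((hasDerivAt_id r).const_mul (E - qR)).sub ha)
        have h2 := h1.div_const sq
        refine h2.congr_deriv ?_
        ring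
      have hGd := hAd.mul hΦd.exp
      refine hGd.congr_deriv ?_
      ring
    · intro r hr
      have hr' := hsub hr
      have hrpos : 0 < r := lt_of_lt_of_le hr0 hr'.1
      have hr2 : r ≤ 2*r0 := le_trans hr.2 (min_le_left _ _)
      have hΔ : 0 ≤ (E - qR) + c/r^2 := by
        rw [hqR_def]
        have heq : (E - (E + c/(4*r0^2))) + c/r^2 = c*((2*r0 - r)*(2*r0 + r))/(4*r0^2*r^2) := by
          field_simp
          ring
        rw [heq]
        have : (0:ℝ) ≤ (2*r0 - r)*(2*r0 + r) := by nlinarith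
        positivity
      rw [hode' r hr']
      have heq2 : (qR * (2 * f r ^ 1 * f' r) + 2 * f' r ^ 1 * (-(E + c/r^2) * f r)
          + A r * (((E - qR) + c/r^2)/sq))
          = ((E - qR) + c/r^2) * (sq * f r - f' r)^2 / sq := by
        simp only [hA_def]
        rw [← hsq2]
        field_simp
        ring
      rw [heq2]
      positivity
  -- monotonicity of Wb on [r0, r1]
  have hWbmono : MonotoneOn Wb (Set.Icc r0 r1) := by
    apply monoAux (F' := fun r =>
      2 * f r ^ 1 * f' r +
        (((2:ℕ) * r ^ 1 * f' r ^ 2 + r^2 * (2 * f' r ^ 1 * f'' r)) * (E*r^2 + c)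
          - r^2 * f' r ^ 2 * (E * ((2:ℕ) * r ^ 1))) / (E*r^2 + c)^2)
    · intro r hr
      have hrpos : 0 < r := lt_of_lt_of_le hr0 hr.1
      have hden : (0:ℝ) < E*r^2 + c := by positivity
      have hnum : HasDerivAt (fun r : ℝ => r^2 * f' r ^ 2)
          ((2:ℕ) * r ^ 1 * f' r ^ 2 + r^2 * (2 * f' r ^ 1 * f'' r)) r :=
        (hasDerivAt_pow 2 r).mul ((hf' r hr).pow 2)
      have hd : HasDerivAt (fun r : ℝ => E*r^2 + c) (E * ((2:ℕ) * r ^ 1)) r :=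
        ((hasDerivAt_pow 2 r).const_mul E).add_const c
      exact ((hf r hr).pow 2).add (hnum.div hd hden.ne')
    · intro r hr
      have hrpos : 0 < r := lt_of_lt_of_le hr0 hr.1
      have hden : (0:ℝ) < E*r^2 + c := by positivity
      rw [hode' r hr]
      have heq : 2 * f r ^ 1 * f' r +
          (((2:ℕ) * r ^ 1 * f' r ^ 2 + r^2 * (2 * f' r ^ 1 * (-(E + c/r^2) * f r))) * (E*r^2 + c)
            - r^2 * f' r ^ 2 * (E * ((2:ℕ) * r ^ 1))) / (E*r^2 + c)^2
          = 2*c*r*f' r^2/(E*r^2+c)^2 := by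
        field_simp
        ring
      rw [heq]
      positivity
  -- Φ increment bound
  have hPhiB : ∀ u, r0 ≤ u → u ≤ 2*r0 → Φ u - Φ r0 ≤ c/(4*r0*sq) := by
    intro u hu1 hu2
    have hupos : 0 < u := lt_of_lt_of_le hr0 hu1
    rw [← sub_nonneg]
    have heq : c/(4*r0*sq) - (Φ u - Φ r0) = c*(u - 2*r0)^2/(4*r0^2*u*sq) := by
      simp only [hPhi_def, hqR_def]
      field_simp
      ring
    rw [heq]
    positivity
  -- pointwise lower bound on W
  have hpt : ∀ r ∈ Set.Icc r0 r1,
      E/qR * Real.exp (-(c/(4*r0*sq))) * W r0 ≤ W r := by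
    intro r hrm
    obtain ⟨hr1, hr2⟩ := hrm
    have hrpos : 0 < r := lt_of_lt_of_le hr0 hr1
    have h0mem : r0 ∈ Set.Icc r0 (min (2*r0) r1) := ⟨le_rfl, hmin⟩
    have hWr0 : 0 ≤ W r0 := by simp only [hW_def]; positivity
    have hA0 : 0 ≤ A r0 := by simp only [hA_def]; positivity
    have hEE : E * E⁻¹ = 1 := mul_inv_cancel₀ hE.ne'
    have k1 : E * W r0 ≤ A r0 := by
      simp only [hW_def, hA_def]
      nlinarith [hEE, hEqR, sq_nonneg (f r0), sq_nonneg (f' r0)]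
    rcases le_or_gt r (2*r0) with hle | h2r
    · -- r ≤ 2 r0 : use G monotone up to r
      have hrmem : r ∈ Set.Icc r0 (min (2*r0) r1) := ⟨hr1, le_min hle hr2⟩
      have hG := hGmono h0mem hrmem hr1
      simp only [hG_def] at hG
      have k2 : A r0 * Real.exp (Φ r0 - Φ r) ≤ A r := by
        rw [Real.exp_sub, ← mul_div_assoc, div_le_iff₀ (Real.exp_pos _)]
        exact hG
      have k3 : A r ≤ qR * W r := by
        simp only [hW_def, hA_def]
        nlinarith [hEE, hEqR, sq_nonneg (f' r), sq_nonneg (f r),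
          mul_nonneg (sub_nonneg.2 hEqR) (mul_nonneg (inv_nonneg.2 hE.le) (sq_nonneg (f' r)))]
      have he : Real.exp (-(c/(4*r0*sq))) ≤ Real.exp (Φ r0 - Φ r) :=
        Real.exp_le_exp.2 (by linarith [hPhiB r hr1 hle])
      calc E/qR * Real.exp (-(c/(4*r0*sq))) * W r0
          = (E * W r0) * Real.exp (-(c/(4*r0*sq))) / qR := by ring
        _ ≤ A r0 * Real.exp (-(c/(4*r0*sq))) / qR := by
            apply div_le_div_of_nonneg_right ?_ hqR.le |>.trans_eq rfl
            exact mul_le_mul_of_nonneg_right k1 (Real.exp_pos _).le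
        _ ≤ A r0 * Real.exp (Φ r0 - Φ r) / qR := by
            apply div_le_div_of_nonneg_right ?_ hqR.le |>.trans_eq rfl
            exact mul_le_mul_of_nonneg_left he hA0
        _ ≤ A r / qR := by
            exact div_le_div_of_nonneg_right k2 hqR.le |>.trans_eq rfl
        _ ≤ W r := by
            rw [div_le_iff₀ hqR]
            linarith [k3]
    · -- 2 r0 < r : use G monotone up to 2 r0, then Wb monotone
      have h2mem : 2*r0 ∈ Set.Icc r0 (min (2*r0) r1) :=
        ⟨by linarith, le_min le_rfl (by linarith)⟩
      have hG := hGmono h0mem h2mem (by linarith)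
      simp only [hG_def] at hG
      have k2 : A r0 * Real.exp (Φ r0 - Φ (2*r0)) ≤ A (2*r0) := by
        rw [Real.exp_sub, ← mul_div_assoc, div_le_iff₀ (Real.exp_pos _)]
        exact hG
      have k4 : A (2*r0) = qR * Wb (2*r0) := by
        simp only [hA_def, hWb_def, hqR_def]
        field_simp
        ring
      have k5 : Wb (2*r0) ≤ Wb r :=
        hWbmono ⟨by linarith, by linarith⟩ ⟨hr1, hr2⟩ h2r.le
      have k6 : Wb r ≤ W r := by
        simp only [hWb_def, hW_def]
        have hden : (0:ℝ) < E*r^2 + c := by positivity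
        have heq : E⁻¹*f' r^2 - r^2*f' r^2/(E*r^2+c) = c*f' r^2/(E*(E*r^2+c)) := by
          field_simp
          ring
        nlinarith [heq, div_nonneg (mul_nonneg hc0 (sq_nonneg (f' r))) (mul_nonneg hE.le hden.le)]
      have he : Real.exp (-(c/(4*r0*sq))) ≤ Real.exp (Φ r0 - Φ (2*r0)) :=
        Real.exp_le_exp.2 (by linarith [hPhiB (2*r0) (by linarith) le_rfl])
      calc E/qR * Real.exp (-(c/(4*r0*sq))) * W r0
          = (E * W r0) * Real.exp (-(c/(4*r0*sq))) / qR := by ring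
        _ ≤ A r0 * Real.exp (-(c/(4*r0*sq))) / qR := by
            apply div_le_div_of_nonneg_right ?_ hqR.le |>.trans_eq rfl
            exact mul_le_mul_of_nonneg_right k1 (Real.exp_pos _).le
        _ ≤ A r0 * Real.exp (Φ r0 - Φ (2*r0)) / qR := by
            apply div_le_div_of_nonneg_right ?_ hqR.le |>.trans_eq rfl
            exact mul_le_mul_of_nonneg_left he hA0
        _ ≤ A (2*r0) / qR := by
            exact div_le_div_of_nonneg_right k2 hqR.le |>.trans_eq rfl
        _ = Wb (2*r0) := by
            rw [k4]
            field_simp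
        _ ≤ Wb r := k5
        _ ≤ W r := k6
  -- integrability
  have hWint : IntegrableOn W (Set.Icc r0 r1) := by
    have hfc : ContinuousOn f (Set.Icc r0 r1) :=
      fun r hr => (hf r hr).continuousAt.continuousWithinAt
    have hfc' : ContinuousOn f' (Set.Icc r0 r1) :=
      fun r hr => (hf' r hr).continuousAt.continuousWithinAt
    have hWc : ContinuousOn W (Set.Icc r0 r1) := by
      simp only [hW_def]
      exact (hfc.pow 2).add (continuousOn_const.mul (hfc'.pow 2))
    exact hWc.integrableOn_Icc
  have hIb : (r1 - r0) * (E/qR * Real.exp (-(c/(4*r0*sq))) * W r0) ≤ C := by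
    have hconst : IntegrableOn (fun _ : ℝ => E/qR * Real.exp (-(c/(4*r0*sq))) * W r0)
        (Set.Icc r0 r1) := by
      exact integrableOn_const (by simp [Real.volume_Icc]) enorm_ne_top
    have hmono := setIntegral_mono_on hconst hWint measurableSet_Icc hpt
    rw [setIntegral_const, Real.volume_real_Icc_of_le hr01.le, smul_eq_mul] at hmono
    have hI2 : (∫ r in Set.Icc r0 r1, W r) ≤ C := by
      have : (fun r => W r) = fun r => f r ^ 2 + E⁻¹ * f' r ^ 2 := by rw [hW_def]
      rw [this]
      exact hint
    linarith
  have hcore : Real.exp (-(c/(2*sE*r0))) ≤ E/qR * Real.exp (-(c/(4*r0*sq))) := by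
    set x : ℝ := c/(4*E*r0^2) with hx_def
    have hx0 : 0 ≤ x := by positivity
    have h1x : (0:ℝ) < 1 + x := by linarith
    have hx : qR/E = 1 + x := by
      rw [hqR_def, hx_def]
      field_simp
    have hsqrt1x : Real.sqrt (1 + x) = sq/sE := by
      rw [← hx, hsq_def, hsE_def, Real.sqrt_div hqR.le]
    have hlog := logAux hx0
    rw [hsqrt1x] at hlog
    have hstep : x / (sq/sE) ≤ c/(2*sE*r0) - c/(4*r0*sq) := by
      rcases hcc with h0 | h2
      · simp [hx_def, h0]
      have hkey : 1 + sE*r0 ≤ 2*r0*sq := by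
        have hsq4 : (2*r0*sq)^2 = 4*E*r0^2 + c := by
          rw [mul_pow, mul_pow, hsq2, hqR_def]
          field_simp
          ring
        have hb : (1 + sE*r0)^2 ≤ (2*r0*sq)^2 := by
          rw [hsq4]
          nlinarith [hsE2, sq_nonneg (sE*r0 - 1), h2, sq_nonneg (sE*r0)]
        have := Real.sqrt_le_sqrt hb
        rwa [Real.sqrt_sq (by positivity), Real.sqrt_sq (by positivity)] at this
      rw [← sub_nonneg]
      have heq : c/(2*sE*r0) - c/(4*r0*sq) - x/(sq/sE)
          = c*(2*r0*sq - (1 + sE*r0))/(4*sE*r0^2*sq) := by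
        rw [hx_def, ← hsE2]
        field_simp
        ring
      rw [heq]
      apply div_nonneg (mul_nonneg hc0 (by linarith)) (by positivity)
    have hfinal : 1 + x ≤ Real.exp (c/(2*sE*r0) - c/(4*r0*sq)) := by
      rw [← Real.exp_log h1x]
      exact Real.exp_le_exp.2 (le_trans hlog hstep)
    have hEqRx : E/qR = (1+x)⁻¹ := by
      rw [← hx, inv_div]
    rw [hEqRx, inv_mul_eq_div, le_div_iff₀ h1x]
    calc Real.exp (-(c/(2*sE*r0))) * (1+x)
        ≤ Real.exp (-(c/(2*sE*r0))) * Real.exp (c/(2*sE*r0) - c/(4*r0*sq)) :=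
          mul_le_mul_of_nonneg_left hfinal (Real.exp_pos _).le
      _ = Real.exp (-(c/(4*r0*sq))) := by
          rw [← Real.exp_add]
          ring_nf
  -- final assembly
  have hW0 : 0 ≤ W r0 := by simp only [hW_def]; positivity
  have hgoal : W r0 ≤ C / (r1 - r0) * Real.exp (c/(2*sE*r0)) := by
    set J : ℝ := c/(2*sE*r0) with hJ_def
    have e1 : Real.exp (-J) * Real.exp J = 1 := by
      rw [← Real.exp_add]
      simp
    have hKW : Real.exp (-J) * W r0 ≤ E/qR * Real.exp (-(c/(4*r0*sq))) * W r0 :=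
      mul_le_mul_of_nonneg_right hcore hW0
    have h2 : (r1 - r0) * (Real.exp (-J) * W r0) ≤ (r1 - r0) * (E/qR * Real.exp (-(c/(4*r0*sq))) * W r0) :=
      mul_le_mul_of_nonneg_left hKW (by linarith)
    have h3 : (r1 - r0) * (Real.exp (-J) * W r0) ≤ C := le_trans h2 hIb
    have h4 : (r1 - r0) * (Real.exp (-J) * W r0) * Real.exp J ≤ C * Real.exp J :=
      mul_le_mul_of_nonneg_right h3 (Real.exp_pos _).le
    have h5 : (r1 - r0) * (Real.exp (-J) * W r0) * Real.exp J = W r0 * (r1 - r0) * (Real.exp (-J) * Real.exp J) := by ring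
    rw [h5, e1, mul_one] at h4
    rw [div_mul_eq_mul_div, le_div_iff₀ (by linarith : (0:ℝ) < r1 - r0)]
    linarith
  exact hgoal
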